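/- Let ω_r > 0 and γ ∈ (−1, 1]. Then ω·|G(ω)| → ω_r·√(1 + ((4/π)·(1 − γ)/(1 + γ))²) as ω → ∞, where G(ω) is the GFORE describing function; i.e., at high frequency the describing-function magnitude of GFORE decays like a constant times 1/ω, preserving the −20 dB per decade slope of the base linear first-order low-pass filter. -/

import Mathlib

/-- Describing-function correction term of GFORE with corner frequency `ωr`
and reset parameter `γ`, at frequency `ω`. -/
noncomputable def Theta (ωr γ ω : ℝ) : ℝ :=
  (2 / Real.pi) * (1 + Real.exp (-Real.pi * ωr / ω)) *
    ((1 - γ) / (1 + γ * Real.exp (-Real.pi * ωr / ω))) * (ω ^ 2 / (ωr ^ 2 + ω ^ 2))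

/-- Describing function of GFORE at frequency `ω`. -/
noncomputable def GforeDF (ωr γ ω : ℝ) : ℂ :=
  (ωr : ℂ) * (1 + Complex.I * (Theta ωr γ ω : ℝ)) / ((ωr : ℂ) + Complex.I * (ω : ℝ))

/-- For `ωr > 0` and `γ ∈ (−1, 1]`, at high frequency the GFORE describing-function
magnitude decays like a constant times `1/ω`:
`ω·|G(ω)| → ωr·√(1 + ((4/π)·(1 − γ)/(1 + γ))²)` as `ω → ∞`. -/
theorem gfore_highfreq_gain (ωr γ : ℝ) (hωr : 0 < ωr) (hγ : γ ∈ Set.Ioc (-1 : ℝ) 1) :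
    Filter.Tendsto (fun ω : ℝ => ω * ‖GforeDF ωr γ ω‖) Filter.atTop
      (nhds (ωr * Real.sqrt (1 + ((4 / Real.pi) * (1 - γ) / (1 + γ)) ^ 2))) := by
  obtain ⟨hγ1, hγ2⟩ := hγ
  have hγn : (1 : ℝ) + γ ≠ 0 := by nlinarith
  set L : ℝ := (4 / Real.pi) * (1 - γ) / (1 + γ) with hLdef
  -- basic limits
  have hinv : Filter.Tendsto (fun ω : ℝ => ω⁻¹) Filter.atTop (nhds 0) :=
    tendsto_inv_atTop_zero
  have hexp : Filter.Tendsto (fun ω : ℝ => Real.exp (-Real.pi * ωr / ω))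
      Filter.atTop (nhds 1) := by
    have harg : Filter.Tendsto (fun ω : ℝ => -Real.pi * ωr / ω) Filter.atTop (nhds 0) := by
      simp only [div_eq_mul_inv]
      simpa using hinv.const_mul (-Real.pi * ωr)
    simpa [Function.comp_def] using (Real.continuous_exp.tendsto 0).comp harg
  have h0 : Filter.Tendsto (fun ω : ℝ => ωr ^ 2 / ω ^ 2) Filter.atTop (nhds 0) := by
    have hp : Filter.Tendsto (fun ω : ℝ => ω ^ 2) Filter.atTop Filter.atTop :=
      Filter.tendsto_pow_atTop (by norm_num)
    have := hp.inv_tendsto_atTop.const_mul (ωr ^ 2)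
    simpa [div_eq_mul_inv] using this
  -- limit of Theta
  have h1 : Filter.Tendsto (fun ω : ℝ => 1 + Real.exp (-Real.pi * ωr / ω))
      Filter.atTop (nhds (1 + 1)) := hexp.const_add 1
  have h2 : Filter.Tendsto
      (fun ω : ℝ => (1 - γ) / (1 + γ * Real.exp (-Real.pi * ωr / ω)))
      Filter.atTop (nhds ((1 - γ) / (1 + γ))) := by
    have hden : Filter.Tendsto (fun ω : ℝ => 1 + γ * Real.exp (-Real.pi * ωr / ω))
        Filter.atTop (nhds (1 + γ)) := by
      have := (hexp.const_mul γ).const_add 1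
      simpa using this
    exact (tendsto_const_nhds.div hden hγn)
  have hsq : Filter.Tendsto (fun ω : ℝ => ω ^ 2 / (ωr ^ 2 + ω ^ 2))
      Filter.atTop (nhds 1) := by
    have hlim : Filter.Tendsto (fun ω : ℝ => 1 / (ωr ^ 2 / ω ^ 2 + 1))
        Filter.atTop (nhds 1) := by
      have hd : Filter.Tendsto (fun ω : ℝ => ωr ^ 2 / ω ^ 2 + 1)
          Filter.atTop (nhds 1) := by simpa using h0.add_const 1
      have h11 : Filter.Tendsto (fun ω : ℝ => 1 / (ωr ^ 2 / ω ^ 2 + 1))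
          Filter.atTop (nhds (1 / 1)) := Filter.Tendsto.div tendsto_const_nhds hd one_ne_zero
      norm_num at h11
      exact h11.congr fun ω => (one_div _).symm
    apply hlim.congr'
    filter_upwards [Filter.eventually_gt_atTop (0 : ℝ)] with ω hω
    have hω0 : ω ≠ 0 := ne_of_gt hω
    have hden : ωr ^ 2 + ω ^ 2 ≠ 0 := by positivity
    field_simp
  have hΘ : Filter.Tendsto (fun ω : ℝ => Theta ωr γ ω) Filter.atTop (nhds L) := by
    have := (((tendsto_const_nhds (x := (2 / Real.pi : ℝ))).mul h1).mul h2).mul hsq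
    have hval : (2 / Real.pi) * (1 + 1) * ((1 - γ) / (1 + γ)) * 1 = L := by
      rw [hLdef]; ring
    rw [hval] at this
    exact this.congr fun ω => by rw [Theta]
  -- the rewritten function and its limit
  have hnum : Filter.Tendsto (fun ω : ℝ => Real.sqrt (1 + Theta ωr γ ω ^ 2))
      Filter.atTop (nhds (Real.sqrt (1 + L ^ 2))) := by
    have := (hΘ.pow 2).const_add 1
    exact ((Real.continuous_sqrt.tendsto _).comp this)
  have hden : Filter.Tendsto (fun ω : ℝ => Real.sqrt (ωr ^ 2 / ω ^ 2 + 1))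
      Filter.atTop (nhds 1) := by
    have := (Real.continuous_sqrt.tendsto _).comp (h0.add_const 1)
    simpa [Function.comp_def] using this
  have hmain : Filter.Tendsto
      (fun ω : ℝ => ωr * Real.sqrt (1 + Theta ωr γ ω ^ 2) / Real.sqrt (ωr ^ 2 / ω ^ 2 + 1))
      Filter.atTop (nhds (ωr * Real.sqrt (1 + L ^ 2))) := by
    have h3 : Filter.Tendsto
        (fun ω : ℝ => ωr * Real.sqrt (1 + Theta ωr γ ω ^ 2) / Real.sqrt (ωr ^ 2 / ω ^ 2 + 1))
        Filter.atTop (nhds (ωr * Real.sqrt (1 + L ^ 2) / 1)) :=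
      Filter.Tendsto.div ((tendsto_const_nhds (x := ωr)).mul hnum) hden one_ne_zero
    simpa using h3
  -- transfer via eventual equality
  apply hmain.congr'
  filter_upwards [Filter.eventually_gt_atTop (0 : ℝ)] with ω hω
  have hω0 : ω ≠ 0 := ne_of_gt hω
  have habs1 : ‖1 + Complex.I * (Theta ωr γ ω : ℝ)‖ =
      Real.sqrt (1 + Theta ωr γ ω ^ 2) := by
    rw [Complex.norm_def, Complex.normSq_apply]
    simp
    ring_nf
  have habs2 : ‖(ωr : ℂ) + Complex.I * (ω : ℝ)‖ =
      Real.sqrt (ωr ^ 2 + ω ^ 2) := by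
    rw [Complex.norm_def, Complex.normSq_apply]
    simp
    ring_nf
  have hG : ‖GforeDF ωr γ ω‖ =
      ωr * Real.sqrt (1 + Theta ωr γ ω ^ 2) / Real.sqrt (ωr ^ 2 + ω ^ 2) := by
    rw [GforeDF, norm_div, norm_mul, habs1, habs2, Complex.norm_real, Real.norm_eq_abs,
      abs_of_pos hωr]
  have hsqrtden : Real.sqrt (ωr ^ 2 / ω ^ 2 + 1) = Real.sqrt (ωr ^ 2 + ω ^ 2) / ω := by
    have h : ωr ^ 2 / ω ^ 2 + 1 = (ωr ^ 2 + ω ^ 2) / ω ^ 2 := by field_simp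
    rw [h, Real.sqrt_div (by positivity), Real.sqrt_sq hω.le]
  have hpos : (0 : ℝ) < Real.sqrt (ωr ^ 2 + ω ^ 2) := Real.sqrt_pos.mpr (by positivity)
  rw [hsqrtden, hG]
  field_simp
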